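/- Suppose φ satisfies Assumption (A). Then ∫_{ℝ^d} φ⁻(|x|) dx < ∞ and lim_{a→0} a^d · v₀(a) = ∫_{ℝ^d} φ⁻(|x|) dx. -/

import Mathlib

open MeasureTheory Filter Topology Set
open scoped BigOperators ENNReal NNReal

noncomputable section

attribute [local instance] Classical.propDecidable

/-- Points of `ℝ^d` (Euclidean space). -/
abbrev Pt (d : ℕ) : Type := EuclideanSpace ℝ (Fin d)

/-- The index `r ∈ ℤ^d` of the cube `Δ_a(r)` of the partition `Δ̄_a` containing `x`:
for `a > 0` we have `cubeIdx d a x = r ↔ ∀ i, a*(r i - 1/2) ≤ x i ∧ x i < a*(r i + 1/2)`. -/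
def cubeIdx (d : ℕ) (a : ℝ) (x : Pt d) : Fin d → ℤ := fun i => ⌊x i / a + 1/2⌋

/-- `φ⁺(t) = max {0, φ(t)}`. -/
def phiPlus (φ : ℝ → ℝ) (t : ℝ) : ℝ := max (φ t) 0

/-- `φ⁻(t) = -min {0, φ(t)}`. -/
def phiMinus (φ : ℝ → ℝ) (t : ℝ) : ℝ := max (-(φ t)) 0

/-- Energy `U(γ) = Σ_{{x,y}⊂γ} φ(|x-y|)` of a finite configuration. -/
def energy (d : ℕ) (φ : ℝ → ℝ) (γ : Finset (Pt d)) : ℝ :=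
  (∑ p ∈ γ.offDiag, φ (dist p.1 p.2)) / 2

/-- Interaction energy `W(η;γ) = Σ_{x∈η} Σ_{y∈γ} φ(|x-y|)`. -/
def interW (d : ℕ) (φ : ℝ → ℝ) (η γ : Finset (Pt d)) : ℝ :=
  ∑ x ∈ η, ∑ y ∈ γ, φ (dist x y)

/-- Number of points of `γ` in the cube `Δ_a(r)`, i.e. `|γ_Δ|`. -/
def cubeCount (d : ℕ) (a : ℝ) (γ : Finset (Pt d)) (r : Fin d → ℤ) : ℕ :=
  (γ.filter fun x => cubeIdx d a x = r).card

/-- `Σ_{Δ ∈ Δ̄_a : |γ_Δ| ≥ 2} |γ_Δ|²`. -/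
def densSum (d : ℕ) (a : ℝ) (γ : Finset (Pt d)) : ℝ :=
  ∑ r ∈ γ.image (cubeIdx d a),
    if 2 ≤ cubeCount d a γ r then (cubeCount d a γ r : ℝ) ^ 2 else 0

/-- `b(a) = inf {φ⁺(|x-y|) : x ≠ y lie in one common cube of Δ̄_a}`. -/
def bVal (d : ℕ) (φ : ℝ → ℝ) (a : ℝ) : ℝ :=
  sInf {t : ℝ | ∃ x y : Pt d, x ≠ y ∧ cubeIdx d a x = cubeIdx d a y ∧ t = phiPlus φ (dist x y)}

/-- `v₀(a) = Σ_{Δ'∈Δ̄_a} sup_{x∈Δ₀} sup_{y∈Δ'} φ⁻(|x-y|)` (valued in `ℝ≥0∞`). -/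
def v0E (d : ℕ) (φ : ℝ → ℝ) (a : ℝ) : ℝ≥0∞ :=
  ∑' r : Fin d → ℤ,
    ⨆ x ∈ {x : Pt d | cubeIdx d a x = 0}, ⨆ y ∈ {y : Pt d | cubeIdx d a y = r},
      ENNReal.ofReal (phiMinus φ (dist x y))

/-- Real value of `v₀(a)`. -/
def v0Val (d : ℕ) (φ : ℝ → ℝ) (a : ℝ) : ℝ := (v0E d φ a).toReal

/-- Assumption (A) on the interaction potential. -/
structure AssumptionA (d : ℕ) (φ : ℝ → ℝ) (r₀ R φ₀ φ₁ ε₀ s : ℝ) : Prop where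
  cont : ContinuousOn φ (Set.Ioi (0 : ℝ))
  r0_pos : 0 < r₀
  R_gt : r₀ < R
  phi0_pos : 0 < φ₀
  phi1_pos : 0 < φ₁
  eps0_pos : 0 < ε₀
  s_ge : (d : ℝ) ≤ s
  decay : ∀ t : ℝ, R ≤ t → -(φ₁ / t ^ ((d : ℝ) + ε₀)) ≤ φ t
  core : ∀ t : ℝ, 0 < t → t ≤ r₀ → φ₀ / t ^ s ≤ φ t

/-- `χ₋^a(γ) = 1` iff no cube of `Δ̄_a` contains two or more points of `γ`. -/
def chiM (d : ℕ) (a : ℝ) (γ : Finset (Pt d)) : ℝ :=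
  if ∀ x ∈ γ, ∀ y ∈ γ, cubeIdx d a x = cubeIdx d a y → x = y then 1 else 0

/-- The finite configuration `{y₁,…,y_n}`. -/
def confOf {d n : ℕ} (y : Fin n → Pt d) : Finset (Pt d) := Finset.image y Finset.univ

/-- Weighted grand partition function `1 + Σ_{n≥1} (zⁿ/n!) ∫_{Λⁿ} e^{-βU({x₁,…,xₙ})} w({x₁,…,xₙ})`. -/
def ZW (d : ℕ) (φ : ℝ → ℝ) (z β : ℝ) (Λ : Set (Pt d)) (w : Finset (Pt d) → ℝ) : ℝ :=
  1 + ∑' n : ℕ, (z ^ (n + 1) / (n + 1).factorial) *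
    ∫ y in {y : Fin (n + 1) → Pt d | ∀ i, y i ∈ Λ},
      Real.exp (-β * energy d φ (confOf y)) * w (confOf y)

/-- Grand partition function `Z_Λ(z,β)`. -/
def ZΛ (d : ℕ) (φ : ℝ → ℝ) (z β : ℝ) (Λ : Set (Pt d)) : ℝ := ZW d φ z β Λ fun _ => 1

/-- Dilute (quasi-lattice approximated) partition function `Z_Λ^{(-)}(z,β,a)`. -/
def ZΛm (d : ℕ) (φ : ℝ → ℝ) (z β a : ℝ) (Λ : Set (Pt d)) : ℝ := ZW d φ z β Λ (chiM d a)

/-- `Σ_{n≥0} (zⁿ/n!) ∫_{Λⁿ} e^{-βU(η∪{y₁,…,y_n})} w(η∪{y₁,…,y_n})`. -/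
def corrInt (d : ℕ) (φ : ℝ → ℝ) (z β : ℝ) (Λ : Set (Pt d)) (η : Finset (Pt d))
    (w : Finset (Pt d) → ℝ) : ℝ :=
  Real.exp (-β * energy d φ η) * w η +
  ∑' n : ℕ, (z ^ (n + 1) / (n + 1).factorial) *
    ∫ y in {y : Fin (n + 1) → Pt d | ∀ i, y i ∈ Λ},
      Real.exp (-β * energy d φ (η ∪ confOf y)) * w (η ∪ confOf y)

/-- Finite-volume correlation function `ρ_Λ(η;z,β)`. -/
def rhoΛ (d : ℕ) (φ : ℝ → ℝ) (z β : ℝ) (Λ : Set (Pt d)) (η : Finset (Pt d)) : ℝ :=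
  z ^ η.card / ZΛ d φ z β Λ * corrInt d φ z β Λ η fun _ => 1

/-- Approximated correlation function `ρ_Λ^{(-)}(η;z,β,a)`. -/
def rhoΛm (d : ℕ) (φ : ℝ → ℝ) (z β a : ℝ) (Λ : Set (Pt d)) (η : Finset (Pt d)) : ℝ :=
  z ^ η.card / ZΛm d φ z β a Λ * corrInt d φ z β Λ η (chiM d a)

/-- `ε₁(a)`. -/
def eps1 (d : ℕ) (φ : ℝ → ℝ) (z β a : ℝ) : ℝ :=
  1/2 * z^2 * a^(2*d) * Real.exp (-β * (bVal d φ a - 5 * v0Val d φ a)) *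
    Real.exp (z * a^d * Real.exp (-β * (bVal d φ a - 3 * v0Val d φ a)))

/-- The cube `[-L/2, L/2)^d`. -/
def boxHalf (d : ℕ) (L : ℝ) : Set (Pt d) := {x | ∀ i, -(L/2) ≤ x i ∧ x i < L/2}

/-- The cube `Λ_l = [-a(l+1/2), a(l+1/2))^d`, a union of cubes of `Δ̄_a`. -/
def boxLat (d : ℕ) (a : ℝ) (l : ℕ) : Set (Pt d) :=
  {x | ∀ i, -(a*(l+1/2)) ≤ x i ∧ x i < a*(l+1/2)}

lemma cubeIdx_apply_eq_iff {a : ℝ} (ha : 0 < a) (u : ℝ) (n : ℤ) :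
    ⌊u / a + 1/2⌋ = n ↔ a * (n - 1/2) ≤ u ∧ u < a * (n + 1/2) := by
  rw [Int.floor_eq_iff]
  constructor
  · rintro ⟨h1, h2⟩
    have h1' := (le_div_iff₀ ha).mp (by linarith : (n : ℝ) - 1/2 ≤ u / a)
    have h2' := (div_lt_iff₀ ha).mp (by linarith : u / a < (n : ℝ) + 1/2)
    constructor <;> nlinarith
  · rintro ⟨h1, h2⟩
    have h1' : (n : ℝ) - 1/2 ≤ u / a := (le_div_iff₀ ha).mpr (by linarith)
    have h2' : u / a < (n : ℝ) + 1/2 := (div_lt_iff₀ ha).mpr (by linarith)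
    constructor <;> [linarith; linarith]

lemma cubeIdx_eq_iff {d : ℕ} {a : ℝ} (ha : 0 < a) (x : Pt d) (r : Fin d → ℤ) :
    cubeIdx d a x = r ↔ ∀ i, a * (r i - 1/2) ≤ x i ∧ x i < a * (r i + 1/2) := by
  rw [funext_iff]
  exact forall_congr' fun i => cubeIdx_apply_eq_iff ha (x i) (r i)

lemma cubeIdx_zero {d : ℕ} {a : ℝ} (ha : 0 < a) : cubeIdx d a (0 : Pt d) = 0 := by
  rw [cubeIdx_eq_iff ha]
  intro i
  have h0 : (0 : Pt d) i = 0 := rfl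
  have h1 : ((0 : Fin d → ℤ) i : ℝ) = 0 := by simp
  rw [h0, h1]
  constructor <;> nlinarith

lemma norm_le_of_coords {d : ℕ} (x : Pt d) (c : ℝ) (hc : 0 ≤ c)
    (h : ∀ i, |x i| ≤ c) : ‖x‖ ≤ Real.sqrt d * c := by
  rw [EuclideanSpace.norm_eq]
  have h1 : ∑ i, ‖x i‖ ^ 2 ≤ (d : ℝ) * c ^ 2 := by
    calc ∑ i, ‖x i‖ ^ 2 ≤ ∑ _i : Fin d, c ^ 2 := by
          refine Finset.sum_le_sum fun i _ => ?_
          have := h i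
          rw [Real.norm_eq_abs]
          nlinarith [abs_nonneg (x i)]
      _ = (d : ℝ) * c ^ 2 := by simp [Finset.sum_const, nsmul_eq_mul]
  calc Real.sqrt (∑ i, ‖x i‖ ^ 2) ≤ Real.sqrt ((d : ℝ) * c ^ 2) := Real.sqrt_le_sqrt h1
    _ = Real.sqrt d * c := by
        rw [Real.sqrt_mul (Nat.cast_nonneg d), Real.sqrt_sq hc]

/-- distance estimate -/
lemma dist_est {d : ℕ} {a : ℝ} (ha : 0 < a) (x x' y : Pt d)
    (hx' : cubeIdx d a x' = 0) (hy : cubeIdx d a y = cubeIdx d a x) :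
    |dist x' y - ‖x‖| ≤ 2 * Real.sqrt d * a := by
  have hsd : (0:ℝ) ≤ Real.sqrt d := Real.sqrt_nonneg _
  have h1 : ‖x'‖ ≤ Real.sqrt d * a := by
    refine le_trans (norm_le_of_coords x' (a/2) (by linarith) fun i => ?_) (by nlinarith)
    have := (cubeIdx_eq_iff ha x' 0).mp hx' i
    have h0 : ((0 : Fin d → ℤ) i : ℝ) = 0 := by simp
    rw [h0] at this
    rw [abs_le]; constructor <;> nlinarith [this.1, this.2]
  have h2 : dist y x ≤ Real.sqrt d * a := by
    have hd : dist y x = ‖(y - x : Pt d)‖ := by rw [dist_eq_norm]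
    rw [hd]
    refine norm_le_of_coords _ a ha.le fun i => ?_
    have hyi := (cubeIdx_eq_iff ha y (cubeIdx d a x)).mp hy i
    have hxi := (cubeIdx_eq_iff ha x (cubeIdx d a x)).mp rfl i
    have : (y - x : Pt d) i = y i - x i := rfl
    rw [this, abs_le]; constructor <;> nlinarith [hyi.1, hyi.2, hxi.1, hxi.2]
  have t1 : |dist x' y - dist (0 : Pt d) y| ≤ dist x' 0 := abs_dist_sub_le _ _ _
  have t2 : |dist (0 : Pt d) y - dist (0 : Pt d) x| ≤ dist y x := by
    have := abs_dist_sub_le y x (0 : Pt d)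
    rwa [dist_comm y 0, dist_comm x 0] at this
  have hx0 : dist (0 : Pt d) x = ‖x‖ := by rw [dist_comm, dist_zero_right]
  have hx'0 : dist x' 0 = ‖x'‖ := dist_zero_right x'
  rw [hx0] at t2
  calc |dist x' y - ‖x‖| ≤ |dist x' y - dist (0:Pt d) y| + |dist (0:Pt d) y - ‖x‖| := by
        have := abs_sub_le (dist x' y) (dist (0:Pt d) y) ‖x‖
        linarith [abs_sub_abs_le_abs_sub (dist x' y) (dist (0:Pt d) y)]
    _ ≤ ‖x'‖ + dist y x := by rw [hx'0] at t1; linarith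
    _ ≤ 2 * Real.sqrt d * a := by linarith


section PhiBounds

variable {d : ℕ} {φ : ℝ → ℝ} {r₀ R φ₀ φ₁ ε₀ s : ℝ}
  (hA : AssumptionA d φ r₀ R φ₀ φ₁ ε₀ s)

lemma phiMinus_nonneg (t : ℝ) : 0 ≤ phiMinus φ t := le_max_right _ _

include hA

lemma hR_pos : (0:ℝ) < R := hA.r0_pos.trans hA.R_gt

lemma hp_pos : (0:ℝ) < (d:ℝ) + ε₀ := by
  have h := hA.eps0_pos
  have h2 : (0:ℝ) ≤ d := Nat.cast_nonneg d
  linarith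

lemma phiMinus_core_zero {t : ℝ} (ht : 0 < t) (ht' : t ≤ r₀) : phiMinus φ t = 0 := by
  have h1 : 0 < φ₀ / t ^ s := by
    apply div_pos hA.phi0_pos (Real.rpow_pos_of_pos ht s)
  have := hA.core t ht ht'
  exact max_eq_right (by linarith)

lemma phiMinus_decay {t : ℝ} (ht : R ≤ t) :
    phiMinus φ t ≤ φ₁ / t ^ ((d:ℝ) + ε₀) := by
  have htp : 0 < t := (hR_pos hA).trans_le ht
  have h1 : 0 < φ₁ / t ^ ((d:ℝ) + ε₀) :=
    div_pos hA.phi1_pos (Real.rpow_pos_of_pos htp _)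
  exact max_le (by linarith [hA.decay t ht]) h1.le

lemma phiMinus_cont : ContinuousOn (phiMinus φ) (Set.Ioi (0:ℝ)) := by
  intro t ht
  exact ((hA.cont.neg t ht).max continuousWithinAt_const :)

/-- global bound on `φ⁻` on `[0, ∞)`. -/
lemma phiMinus_global : ∃ C : ℝ, 0 ≤ C ∧ ∀ t : ℝ, 0 ≤ t → phiMinus φ t ≤ C := by
  have hr0 := hA.r0_pos
  have hsub : Set.Icc r₀ R ⊆ Set.Ioi 0 := fun t ht => lt_of_lt_of_le hr0 ht.1
  obtain ⟨t₀, ht₀, hmax⟩ := IsCompact.exists_isMaxOn isCompact_Icc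
    ⟨r₀, Set.left_mem_Icc.mpr hA.R_gt.le⟩ ((phiMinus_cont hA).mono hsub)
  set p := (d:ℝ) + ε₀ with hp
  refine ⟨max (phiMinus φ t₀) (max (phiMinus φ 0) (φ₁ / R ^ p)), le_trans (phiMinus_nonneg _) (le_max_left _ _), fun t ht => ?_⟩
  rcases eq_or_lt_of_le ht with h0 | htpos
  · exact le_trans (le_of_eq (by rw [← h0])) (le_trans (le_max_left _ _) (le_max_right _ _))
  rcases le_or_gt t r₀ with h1 | h1
  · rw [phiMinus_core_zero hA htpos h1]
    exact le_trans (phiMinus_nonneg _) (le_max_left _ _)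
  rcases le_or_gt t R with h2 | h2
  · exact le_trans (hmax ⟨h1.le, h2⟩) (le_max_left _ _)
  · have hRp : (0:ℝ) < R := hR_pos hA
    have := phiMinus_decay hA h2.le
    have hmono : φ₁ / t ^ p ≤ φ₁ / R ^ p :=
      div_le_div_of_nonneg_left hA.phi1_pos.le (Real.rpow_pos_of_pos hRp p)
        (Real.rpow_le_rpow hRp.le h2.le (hp_pos hA).le)
    exact le_trans (le_trans this hmono) (le_trans (le_max_right _ _) (le_max_right _ _))

end PhiBounds

section PhiBounds2
variable {d : ℕ} {φ : ℝ → ℝ} {r₀ R φ₀ φ₁ ε₀ s : ℝ}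
  (hA : AssumptionA d φ r₀ R φ₀ φ₁ ε₀ s)
include hA

lemma phiMinus_dom : ∃ K : ℝ, 0 ≤ K ∧ ∀ t u : ℝ, 0 ≤ t → 0 ≤ u → |t - u| ≤ 1 →
    phiMinus φ t ≤ K * (1 + u) ^ (-((d:ℝ) + ε₀)) := by
  obtain ⟨C, hC, hCb⟩ := phiMinus_global hA
  have hppos := hp_pos hA
  have hRp := hR_pos hA
  set p := (d:ℝ) + ε₀ with hpdef
  have hcpos : (0:ℝ) < (R+2)/R := by positivity
  refine ⟨max (C * (R+2)^p) (φ₁ * ((R+2)/R)^p),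
    le_trans (by positivity) (le_max_left _ _), fun t u ht hu habs => ?_⟩
  have h1u : (0:ℝ) < 1 + u := by linarith
  have h1up : (0:ℝ) < (1+u) ^ p := Real.rpow_pos_of_pos h1u p
  rw [Real.rpow_neg h1u.le]
  rw [abs_le] at habs
  rcases le_or_gt u (R+1) with hcase | hcase
  · refine le_trans (hCb t ht) (le_trans ?_ (mul_le_mul_of_nonneg_right (le_max_left _ _) (inv_nonneg.mpr h1up.le)))
    rw [← div_eq_mul_inv, le_div_iff₀ h1up]
    have : (1+u)^p ≤ (R+2)^p := Real.rpow_le_rpow h1u.le (by linarith) hppos.le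
    nlinarith
  · have htR : R < t := by linarith
    have hu1 : (0:ℝ) < u - 1 := by linarith
    have hu1p : (0:ℝ) < (u-1)^p := Real.rpow_pos_of_pos hu1 p
    have step1 : phiMinus φ t ≤ φ₁ / (u-1)^p := by
      refine le_trans (phiMinus_decay hA htR.le) ?_
      exact div_le_div_of_nonneg_left hA.phi1_pos.le hu1p
        (Real.rpow_le_rpow hu1.le (by linarith) hppos.le)
    refine le_trans step1 (le_trans ?_ (mul_le_mul_of_nonneg_right (le_max_right _ _) (inv_nonneg.mpr h1up.le)))
    rw [← div_eq_mul_inv, div_le_div_iff₀ hu1p h1up]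
    have hkey : (1+u)^p ≤ ((R+2)/R)^p * (u-1)^p := by
      rw [← Real.mul_rpow hcpos.le hu1.le]
      refine Real.rpow_le_rpow h1u.le ?_ hppos.le
      rw [div_mul_eq_mul_div, le_div_iff₀ hRp]
      nlinarith
    nlinarith [Real.rpow_nonneg hcpos.le p, hA.phi1_pos.le]
end PhiBounds2


def Sval (d : ℕ) (φ : ℝ → ℝ) (a : ℝ) (r : Fin d → ℤ) : ℝ≥0∞ :=
  ⨆ x ∈ {x : Pt d | cubeIdx d a x = 0}, ⨆ y ∈ {y : Pt d | cubeIdx d a y = r},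
    ENNReal.ofReal (phiMinus φ (dist x y))

lemma v0E_eq (d : ℕ) (φ : ℝ → ℝ) (a : ℝ) : v0E d φ a = ∑' r, Sval d φ a r := rfl

def Hfun (d : ℕ) (φ : ℝ → ℝ) (a : ℝ) (x : Pt d) : ℝ≥0∞ := Sval d φ a (cubeIdx d a x)

lemma measurable_cubeIdx (d : ℕ) (a : ℝ) : Measurable (cubeIdx d a) := by
  apply measurable_pi_lambda
  intro i
  have h1 : Measurable fun x : Pt d => x i :=
    (measurable_pi_apply i).comp (MeasurableEquiv.toLp 2 (Fin d → ℝ)).symm.measurable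
  exact Int.measurable_floor.comp ((h1.div_const a).add_const (1/2))

lemma measurable_Hfun (d : ℕ) (φ : ℝ → ℝ) (a : ℝ) : Measurable (Hfun d φ a) :=
  (measurable_of_countable (Sval d φ a)).comp (measurable_cubeIdx d a)

lemma measurableSet_cube (d : ℕ) (a : ℝ) (r : Fin d → ℤ) :
    MeasurableSet {x : Pt d | cubeIdx d a x = r} :=
  (measurable_cubeIdx d a) (measurableSet_singleton r)

lemma volume_cube {d : ℕ} {a : ℝ} (ha : 0 < a) (r : Fin d → ℤ) :
    volume {x : Pt d | cubeIdx d a x = r} = ENNReal.ofReal (a ^ d) := by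
  have he := EuclideanSpace.volume_preserving_symm_measurableEquiv_toLp (Fin d)
  have hset : {x : Pt d | cubeIdx d a x = r} =
      (MeasurableEquiv.toLp 2 (Fin d → ℝ)).symm ⁻¹'
        (Set.univ.pi fun i => Set.Ico (a*(r i - 1/2)) (a*(r i + 1/2))) := by
    ext x
    simp only [Set.mem_setOf_eq, Set.mem_preimage, Set.mem_pi, Set.mem_univ,
      forall_true_left, Set.mem_Ico]
    rw [cubeIdx_eq_iff ha]
    exact forall_congr' fun i => Iff.rfl
  rw [hset, he.measure_preimage
    ((MeasurableSet.univ_pi fun i => measurableSet_Ico).nullMeasurableSet)]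
  rw [volume_pi_pi]
  have hone : ∀ i : Fin d, volume (Set.Ico (a*(r i - 1/2)) (a*(r i + 1/2))) = ENNReal.ofReal a := by
    intro i
    rw [Real.volume_Ico]
    congr 1
    ring
  simp only [hone, Finset.prod_const, Finset.card_univ, Fintype.card_fin]
  rw [ENNReal.ofReal_pow ha.le]

lemma lintegral_Hfun {d : ℕ} {φ : ℝ → ℝ} {a : ℝ} (ha : 0 < a) :
    ∫⁻ x : Pt d, Hfun d φ a x = ENNReal.ofReal (a ^ d) * v0E d φ a := by
  have key : ∀ x : Pt d, Hfun d φ a x =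
      ∑' r : Fin d → ℤ, Set.indicator {x : Pt d | cubeIdx d a x = r} (fun _ => Sval d φ a r) x := by
    intro x
    rw [tsum_eq_single (cubeIdx d a x) (fun r hr => Set.indicator_of_notMem (fun h => hr (by simpa using h.symm)) _)]
    exact (Set.indicator_of_mem (show x ∈ {x' : Pt d | cubeIdx d a x' = cubeIdx d a x} from rfl) (fun _ => Sval d φ a (cubeIdx d a x))).symm
  calc ∫⁻ x : Pt d, Hfun d φ a x
      = ∫⁻ x : Pt d, ∑' r : Fin d → ℤ, Set.indicator {x : Pt d | cubeIdx d a x = r} (fun _ => Sval d φ a r) x := by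
        simp_rw [key]
    _ = ∑' r : Fin d → ℤ, ∫⁻ x : Pt d, Set.indicator {x : Pt d | cubeIdx d a x = r} (fun _ => Sval d φ a r) x :=
        lintegral_tsum fun r => ((measurable_const.indicator (measurableSet_cube d a r)).aemeasurable)
    _ = ∑' r : Fin d → ℤ, Sval d φ a r * ENNReal.ofReal (a ^ d) := by
        refine tsum_congr fun r => ?_
        rw [lintegral_indicator (measurableSet_cube d a r), setLIntegral_const, volume_cube ha]
    _ = ENNReal.ofReal (a ^ d) * v0E d φ a := by
        rw [ENNReal.tsum_mul_right, v0E_eq, mul_comm]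

lemma le_Hfun {d : ℕ} {φ : ℝ → ℝ} {a : ℝ} (ha : 0 < a) (x : Pt d) :
    ENNReal.ofReal (phiMinus φ ‖x‖) ≤ Hfun d φ a x := by
  have h0 : (0 : Pt d) ∈ {x' : Pt d | cubeIdx d a x' = 0} := cubeIdx_zero ha
  refine le_trans ?_ (le_iSup₂ (f := fun x' (_ : x' ∈ {x' : Pt d | cubeIdx d a x' = 0}) =>
    ⨆ y ∈ {y : Pt d | cubeIdx d a y = cubeIdx d a x}, ENNReal.ofReal (phiMinus φ (dist x' y))) (0 : Pt d) h0)
  refine le_trans ?_ (le_iSup₂ (f := fun y (_ : y ∈ {y : Pt d | cubeIdx d a y = cubeIdx d a x}) =>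
    ENNReal.ofReal (phiMinus φ (dist (0 : Pt d) y))) x rfl)
  rw [dist_zero_left]

lemma Hfun_le_of_bound {d : ℕ} {φ : ℝ → ℝ} {K p : ℝ}
    (hb : ∀ t u : ℝ, 0 ≤ t → 0 ≤ u → |t - u| ≤ 1 → phiMinus φ t ≤ K * (1+u) ^ (-p))
    {a : ℝ} (ha : 0 < a) (ha2 : 2 * Real.sqrt d * a ≤ 1) (x : Pt d) :
    Hfun d φ a x ≤ ENNReal.ofReal (K * (1+‖x‖) ^ (-p)) := by
  refine iSup₂_le fun x' hx' => iSup₂_le fun y hy => ?_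
  refine ENNReal.ofReal_le_ofReal ?_
  exact hb _ _ dist_nonneg (norm_nonneg x) (le_trans (dist_est ha x x' y hx' hy) ha2)

lemma volume_zero_singleton {d : ℕ} (hd : 1 ≤ d) : volume ({0} : Set (Pt d)) = 0 := by
  have he := EuclideanSpace.volume_preserving_symm_measurableEquiv_toLp (Fin d)
  have hset : ({0} : Set (Pt d)) =
      (MeasurableEquiv.toLp 2 (Fin d → ℝ)).symm ⁻¹' (Set.univ.pi fun _ => ({0} : Set ℝ)) := by
    ext x
    simp only [Set.mem_singleton_iff, Set.mem_preimage, Set.mem_pi, Set.mem_univ,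
      forall_true_left, Set.mem_singleton_iff]
    constructor
    · intro h i; rw [h]; rfl
    · intro h; ext i; exact h i
  rw [hset, he.measure_preimage
    ((MeasurableSet.univ_pi fun _ => measurableSet_singleton 0).nullMeasurableSet)]
  rw [volume_pi_pi]
  simp only [Real.volume_singleton, Finset.prod_const, Finset.card_univ, Fintype.card_fin]
  exact zero_pow (by omega)

lemma aemeasurable_psi {d : ℕ} (hd : 1 ≤ d) {φ : ℝ → ℝ} {r₀ R φ₀ φ₁ ε₀ s : ℝ}
    (hA : AssumptionA d φ r₀ R φ₀ φ₁ ε₀ s) :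
    AEMeasurable (fun x : Pt d => phiMinus φ ‖x‖) (volume : Measure (Pt d)) := by
  have hU : MeasurableSet {x : Pt d | x ≠ 0} := (measurableSet_singleton 0).compl
  have hcont : ContinuousOn (fun x : Pt d => phiMinus φ ‖x‖) {x : Pt d | x ≠ 0} := by
    refine (phiMinus_cont hA).comp continuous_norm.continuousOn fun x hx => ?_
    exact norm_pos_iff.mpr hx
  have h1 : AEMeasurable (fun x : Pt d => phiMinus φ ‖x‖) (volume.restrict {x : Pt d | x ≠ 0}) :=
    hcont.aemeasurable hU
  rwa [Measure.restrict_eq_self_of_ae_mem] at h1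
  rw [ae_iff]
  have : {x : Pt d | ¬ x ∈ {x : Pt d | x ≠ 0}} = {0} := by ext x; simp
  rw [this]
  exact volume_zero_singleton hd

lemma Hfun_tendsto {d : ℕ} {φ : ℝ → ℝ} {r₀ R φ₀ φ₁ ε₀ s : ℝ}
    (hA : AssumptionA d φ r₀ R φ₀ φ₁ ε₀ s) (x : Pt d) (hx : x ≠ 0) :
    Tendsto (fun a => Hfun d φ a x) (𝓝[>] (0:ℝ))
      (𝓝 (ENNReal.ofReal (phiMinus φ ‖x‖))) := by
  have hnorm : 0 < ‖x‖ := norm_pos_iff.mpr hx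
  rw [ENNReal.tendsto_nhds ENNReal.ofReal_ne_top]
  intro ε hε
  rcases eq_top_or_lt_top ε with htop | hlt
  · exact Eventually.of_forall fun a => Set.mem_Icc.mpr ⟨by simp [htop], by simp [htop]⟩
  · have hε' : 0 < ε.toReal := ENNReal.toReal_pos hε.ne' hlt.ne
    have hcont : ContinuousAt (phiMinus φ) ‖x‖ :=
      (phiMinus_cont hA).continuousAt (Ioi_mem_nhds hnorm)
    obtain ⟨δ, hδ, hδb⟩ := Metric.continuousAt_iff.mp hcont ε.toReal hε'
    have hmem : Set.Ioo (0:ℝ) (δ / (2*Real.sqrt d + 1)) ∈ 𝓝[>] (0:ℝ) :=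
      Ioo_mem_nhdsGT_of_mem ⟨le_refl 0, by positivity⟩
    filter_upwards [hmem] with a ha
    rw [Set.mem_Icc]
    constructor
    · exact le_trans tsub_le_self (le_Hfun ha.1 x)
    · refine iSup₂_le fun x' hx' => iSup₂_le fun y hy => ?_
      have hdist := dist_est ha.1 x x' y hx' hy
      have h2 : 2*Real.sqrt d * a < δ := by
        have hf := (lt_div_iff₀ (by positivity : (0:ℝ) < 2*Real.sqrt d + 1)).mp ha.2
        nlinarith [Real.sqrt_nonneg (d:ℝ), ha.1]
      have hb := hδb (show dist (dist x' y) ‖x‖ < δ by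
        rw [Real.dist_eq]; exact lt_of_le_of_lt hdist h2)
      rw [Real.dist_eq, abs_lt] at hb
      calc ENNReal.ofReal (phiMinus φ (dist x' y))
          ≤ ENNReal.ofReal (phiMinus φ ‖x‖ + ε.toReal) :=
            ENNReal.ofReal_le_ofReal (by linarith [hb.2])
        _ = ENNReal.ofReal (phiMinus φ ‖x‖) + ENNReal.ofReal ε.toReal :=
            ENNReal.ofReal_add (phiMinus_nonneg _) hε'.le
        _ = ENNReal.ofReal (phiMinus φ ‖x‖) + ε := by rw [ENNReal.ofReal_toReal hlt.ne]


/-- Under Assumption (A), `∫_{ℝ^d} φ⁻(|x|) dx < ∞` and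
`lim_{a→0⁺} a^d · v₀(a) = ∫_{ℝ^d} φ⁻(|x|) dx`. -/
theorem v0_asymptotics (d : ℕ) (hd : 1 ≤ d) (φ : ℝ → ℝ)
    (r₀ R φ₀ φ₁ ε₀ s : ℝ) (hA : AssumptionA d φ r₀ R φ₀ φ₁ ε₀ s) :
    Integrable (fun x : Pt d => phiMinus φ ‖x‖) ∧
    Tendsto (fun a : ℝ => a ^ d * v0Val d φ a) (𝓝[>] (0 : ℝ))
      (𝓝 (∫ x : Pt d, phiMinus φ ‖x‖)) := by
  obtain ⟨K, hK, hKb⟩ := phiMinus_dom hA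
  have hppos : (d:ℝ) < (d:ℝ) + ε₀ := by linarith [hA.eps0_pos]
  have hDint : Integrable (fun x : Pt d => K * (1+‖x‖) ^ (-((d:ℝ) + ε₀))) := by
    refine Integrable.const_mul ?_ K
    exact integrable_one_add_norm (by rw [finrank_euclideanSpace_fin]; exact hppos)
  have hDlint : ∫⁻ x : Pt d, ENNReal.ofReal (K * (1+‖x‖) ^ (-((d:ℝ) + ε₀))) < ⊤ :=
    hDint.lintegral_lt_top
  have hpsi_le : ∀ x : Pt d, phiMinus φ ‖x‖ ≤ K * (1+‖x‖) ^ (-((d:ℝ) + ε₀)) := fun x =>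
    hKb _ _ (norm_nonneg x) (norm_nonneg x) (by simp)
  have hmeas := aemeasurable_psi hd hA
  have hint : Integrable (fun x : Pt d => phiMinus φ ‖x‖) :=
    Integrable.mono' hDint hmeas.aestronglyMeasurable (Eventually.of_forall fun x => by
      rw [Real.norm_eq_abs, abs_of_nonneg (phiMinus_nonneg _)]; exact hpsi_le x)
  refine ⟨hint, ?_⟩
  set J := ∫⁻ x : Pt d, ENNReal.ofReal (phiMinus φ ‖x‖) with hJ
  have hJlt : J < ⊤ := hint.lintegral_lt_top
  have hIeq : ∫ x : Pt d, phiMinus φ ‖x‖ = J.toReal :=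
    integral_eq_lintegral_of_nonneg_ae (Eventually.of_forall fun x => phiMinus_nonneg _)
      hmeas.aestronglyMeasurable
  have hsd : (0:ℝ) < 2 * Real.sqrt d + 1 := by positivity
  set a₀ : ℝ := 1 / (2 * Real.sqrt d + 1) with ha₀
  have ha₀pos : 0 < a₀ := by positivity
  have hdom : ∀ a : ℝ, 0 < a → a ≤ a₀ → ∀ x : Pt d,
      Hfun d φ a x ≤ ENNReal.ofReal (K * (1+‖x‖) ^ (-((d:ℝ) + ε₀))) := by
    intro a ha haa x
    refine Hfun_le_of_bound hKb ha ?_ x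
    have hmul : (2*Real.sqrt d + 1) * a ≤ (2*Real.sqrt d + 1) * a₀ :=
      mul_le_mul_of_nonneg_left haa hsd.le
    have hone : (2*Real.sqrt d + 1) * a₀ = 1 := by
      rw [ha₀, mul_one_div_cancel hsd.ne']
    nlinarith [Real.sqrt_nonneg (d:ℝ)]
  have hlim : Tendsto (fun a : ℝ => ∫⁻ x : Pt d, Hfun d φ a x) (𝓝[>] (0:ℝ)) (𝓝 J) := by
    rw [Filter.tendsto_iff_seq_tendsto]
    intro u hu
    have hev : ∀ᶠ n in atTop, u n ∈ Set.Ioc 0 a₀ :=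
      hu.eventually (Ioc_mem_nhdsGT_of_mem ⟨le_refl 0, ha₀pos⟩)
    set v : ℕ → ℝ := fun n => if u n ∈ Set.Ioc 0 a₀ then u n else a₀ with hv
    have hvmem : ∀ n, v n ∈ Set.Ioc 0 a₀ := fun n => by
      by_cases h : u n ∈ Set.Ioc 0 a₀
      · rw [hv]; simp only [if_pos h]; exact h
      · rw [hv]; simp only [if_neg h]; exact ⟨ha₀pos, le_refl _⟩
    have hveq : ∀ᶠ n in atTop, u n = v n := hev.mono fun n h => by
      rw [hv]; simp only [if_pos h]
    have hvt : Tendsto v atTop (𝓝[>] (0:ℝ)) := Filter.Tendsto.congr' hveq hu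
    have hae : ∀ᵐ x : Pt d, Tendsto (fun n => Hfun d φ (v n) x) atTop
        (𝓝 (ENNReal.ofReal (phiMinus φ ‖x‖))) := by
      have h0 : ∀ᵐ x : Pt d, x ≠ (0 : Pt d) := by
        rw [ae_iff]
        have hset : {x : Pt d | ¬ x ≠ 0} = {0} := by ext x; simp
        rw [hset]
        exact volume_zero_singleton hd
      filter_upwards [h0] with x hx
      exact (Hfun_tendsto hA x hx).comp hvt
    have hmain := tendsto_lintegral_of_dominated_convergence (μ := (volume : Measure (Pt d)))
      (F := fun n => Hfun d φ (v n))
      (fun x => ENNReal.ofReal (K * (1+‖x‖) ^ (-((d:ℝ) + ε₀))))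
      (fun n => measurable_Hfun d φ (v n))
      (fun n => Eventually.of_forall fun x => hdom (v n) (hvmem n).1 (hvmem n).2 x)
      hDlint.ne hae
    refine Filter.Tendsto.congr' ?_ hmain
    exact hveq.mono fun n h => by simp only [Function.comp_apply, h]
  have hev2 : ∀ᶠ a in 𝓝[>] (0:ℝ), a ∈ Set.Ioc 0 a₀ :=
    Ioc_mem_nhdsGT_of_mem ⟨le_refl 0, ha₀pos⟩
  have heq : ∀ᶠ a in 𝓝[>] (0:ℝ),
      (∫⁻ x : Pt d, Hfun d φ a x).toReal = a ^ d * v0Val d φ a := by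
    filter_upwards [hev2] with a ha
    have hfin : v0E d φ a ≠ ⊤ := by
      intro htop
      have h1 : ∫⁻ x : Pt d, Hfun d φ a x < ⊤ :=
        lt_of_le_of_lt (lintegral_mono fun x => hdom a ha.1 ha.2 x) hDlint
      rw [lintegral_Hfun ha.1, htop, ENNReal.mul_top
        (by simpa using (ENNReal.ofReal_pos.mpr (pow_pos ha.1 d)).ne')] at h1
      exact absurd h1 (lt_irrefl _)
    rw [lintegral_Hfun ha.1, ENNReal.toReal_mul,
      ENNReal.toReal_ofReal (pow_nonneg ha.1.le d)]
    rfl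
  have final := (ENNReal.tendsto_toReal hJlt.ne).comp hlim
  rw [hIeq]
  exact Filter.Tendsto.congr' heq final
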